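/- Setup: let r ≥ 1, l ∈ ℕ^r with l_k ≥ 1 and l_1+···+l_r = n, d ∈ ℕ^r with d_k ≥ 1, and s_0 ≤ ··· ≤ s_n positive integers. For m ∈ ℤ^r define P_k(m) = {z ∈ ℤ : m_k < z d_k ≤ m_k + l_k}, Q_p = S_p \ ⋃_k P_k(m), q(z) = Σ_{k : P_k(m) < z} l_k (where P_k < z means z d_k > m_k + l_k), and N(m) = { p − q(z) : p ∈ {0,...,n+1}, z ∈ Q_p }. Theorem: if N(m) consists of exactly two consecutive integers, then N(m) = {0, 1}. -/

import Mathlib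

/-- `P_k(m) = {z ∈ ℤ : m < z·d ≤ m + l}`, the integers in `(m/d, (m+l)/d]`. -/
def Pset (m : ℤ) (d l : ℕ) : Set ℤ := {z : ℤ | m < z * d ∧ z * d ≤ m + l}

/-- The set of sums of `p` distinct entries of `s`. -/
def Sset {n : ℕ} (s : Fin (n + 1) → ℕ) (p : ℕ) : Set ℤ :=
  {t : ℤ | ∃ A : Finset (Fin (n + 1)), A.card = p ∧ t = ∑ i ∈ A, (s i : ℤ)}

/-- `q(z) = Σ_{P_k(m) < z} l_k`, where `P_k < z` means `z·d_k > m_k + l_k`. -/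
def qval {r : ℕ} (l d : Fin r → ℕ) (m : Fin r → ℤ) (z : ℤ) : ℕ :=
  ∑ k ∈ Finset.univ.filter (fun k => m k + (l k : ℤ) < z * (d k : ℤ)), l k

/-- `N(m) = { p − q(z) : p ∈ [0, n+1], z ∈ Q_p }` with `Q_p = S_p \ ⋃_k P_k(m)`. -/
def Nset {r n : ℕ} (l d : Fin r → ℕ) (s : Fin (n + 1) → ℕ) (m : Fin r → ℤ) : Set ℤ :=
  {ν : ℤ | ∃ p : ℕ, p ≤ n + 1 ∧ ∃ z : ℤ,
    (z ∈ Sset s p ∧ ∀ k, z ∉ Pset (m k) (d k) (l k)) ∧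
    ν = (p : ℤ) - (qval l d m z : ℤ)}

/-- prefix-sum chain -/
def zc {n : ℕ} (σ : Fin (n + 1) → ℕ) (p : ℕ) : ℤ :=
  ∑ i : Fin (n + 1), if (i : ℕ) < p then (σ i : ℤ) else 0

lemma zc_mono {n : ℕ} (σ : Fin (n + 1) → ℕ) {p p' : ℕ} (h : p ≤ p') :
    zc σ p ≤ zc σ p' := by
  apply Finset.sum_le_sum
  intro i _
  by_cases hi : (i : ℕ) < p
  · rw [if_pos hi, if_pos (lt_of_lt_of_le hi h)]
  · rw [if_neg hi]; positivity

lemma zc_succ {n : ℕ} (σ : Fin (n + 1) → ℕ) {p : ℕ} (hp : p < n + 1) :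
    zc σ (p + 1) = zc σ p + σ ⟨p, hp⟩ := by
  unfold zc
  have : ∀ i : Fin (n + 1), (if (i : ℕ) < p + 1 then (σ i : ℤ) else 0)
      = (if (i : ℕ) < p then (σ i : ℤ) else 0) + (if i = ⟨p, hp⟩ then (σ i : ℤ) else 0) := by
    intro i
    rcases lt_trichotomy (i : ℕ) p with h | h | h
    · rw [if_pos (by omega), if_pos h, if_neg (by intro he; subst he; simp at h)]
      ring
    · rw [if_pos (by omega), if_neg (by omega), if_pos (by apply Fin.ext; simpa using h)]
      ring
    · rw [if_neg (by omega), if_neg (by omega), if_neg ?_]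
      · ring
      · intro he; subst he; simp at h
  rw [Finset.sum_congr rfl (fun i _ => this i), Finset.sum_add_distrib,
    Finset.sum_ite_eq' Finset.univ ⟨p, hp⟩ (fun i => (σ i : ℤ))]
  simp

lemma zc_strictmono {n : ℕ} (σ : Fin (n + 1) → ℕ) (hσ : ∀ i, 1 ≤ σ i)
    {p p' : ℕ} (h : p < p') (h' : p' ≤ n + 1) : zc σ p < zc σ p' := by
  have hp : p < n + 1 := by omega
  calc zc σ p < zc σ (p + 1) := by
        rw [zc_succ σ hp]
        have := hσ ⟨p, hp⟩
        omega
    _ ≤ zc σ p' := zc_mono σ (by omega)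

lemma zc_mem_Sset {n : ℕ} (σ : Fin (n + 1) → ℕ) {p : ℕ} (hp : p ≤ n + 1) :
    zc σ p ∈ Sset σ p := by
  refine ⟨Finset.univ.filter (fun i : Fin (n + 1) => (i : ℕ) < p), ?_, ?_⟩
  · have h : (Finset.univ.filter (fun i : Fin (n + 1) => (i : ℕ) < p))
        = Finset.attachFin (Finset.range p) (by intro m hm; simp at hm; omega) := by
      ext i; simp [Finset.mem_attachFin]
    rw [h, Finset.card_attachFin, Finset.card_range]
  · rw [Finset.sum_filter]; rfl

lemma qval_mono {r : ℕ} (l d : Fin r → ℕ) (m : Fin r → ℤ) {z z' : ℤ} (h : z ≤ z') :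
    qval l d m z ≤ qval l d m z' := by
  apply Finset.sum_le_sum_of_subset
  intro k hk
  simp only [Finset.mem_filter, Finset.mem_univ, true_and] at hk ⊢
  have : z * (d k : ℤ) ≤ z' * (d k : ℤ) :=
    mul_le_mul_of_nonneg_right h (by positivity)
  omega

lemma qval_le {r n : ℕ} (l d : Fin r → ℕ) (m : Fin r → ℤ) (hsum : ∑ k, l k = n) (z : ℤ) :
    qval l d m z ≤ n := by
  rw [← hsum]
  exact Finset.sum_le_sum_of_subset (Finset.filter_subset _ _)

/-- Main chain lemma: some unblocked prefix sum has `p - q ≥ 1`. -/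
lemma chain_exists {r n : ℕ} (l d : Fin r → ℕ) (hd : ∀ k, 1 ≤ d k)
    (hsum : ∑ k, l k = n) (m : Fin r → ℤ) (σ : Fin (n + 1) → ℕ) (hσ : ∀ i, 1 ≤ σ i) :
    ∃ p : ℕ, p ≤ n + 1 ∧ (∀ k, zc σ p ∉ Pset (m k) (d k) (l k)) ∧
      (qval l d m (zc σ p) : ℤ) + 1 ≤ (p : ℤ) := by
  classical
  set P : Finset ℕ := (Finset.range (n + 2)).filter
    (fun p => (p : ℤ) ≤ (qval l d m (zc σ p) : ℤ)) with hP
  have h0P : 0 ∈ P := by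
    simp [hP]
  have hPne : P.Nonempty := ⟨0, h0P⟩
  set ps := P.max' hPne with hps
  have hpsP : ps ∈ P := P.max'_mem hPne
  have hps_le : ps ≤ n + 1 := by
    have := (Finset.mem_filter.mp hpsP).1
    simp at this; omega
  have hps_q : (ps : ℤ) ≤ (qval l d m (zc σ ps) : ℤ) := (Finset.mem_filter.mp hpsP).2
  have hps_lt : ps ≤ n := by
    rcases Nat.lt_or_ge ps (n + 1) with h | h
    · omega
    · exfalso
      have heq : ps = n + 1 := by omega
      have hq := qval_le l d m hsum (zc σ ps)
      omega
  -- every p in (ps, n+1] has q(zc p) < p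
  have hbig : ∀ p, ps < p → p ≤ n + 1 → (qval l d m (zc σ p) : ℤ) + 1 ≤ (p : ℤ) := by
    intro p h1 h2
    by_contra hcon
    push_neg at hcon
    have : p ∈ P := by
      simp only [hP, Finset.mem_filter, Finset.mem_range]
      exact ⟨by omega, by omega⟩
    have := P.le_max' p this
    omega
  -- q at ps+1 equals ps
  have hq1 : (qval l d m (zc σ (ps + 1)) : ℤ) = ps := by
    have h1 := hbig (ps + 1) (by omega) (by omega)
    have h2 : qval l d m (zc σ ps) ≤ qval l d m (zc σ (ps + 1)) :=
      qval_mono l d m (zc_mono σ (by omega))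
    push_cast at *
    omega
  -- suppose all p in (ps, n+1] blocked
  by_contra hcon
  push_neg at hcon
  have hblocked : ∀ p ∈ Finset.Icc (ps + 1) (n + 1), ∃ k, zc σ p ∈ Pset (m k) (d k) (l k) := by
    intro p hp
    simp only [Finset.mem_Icc] at hp
    by_contra hnk
    push_neg at hnk
    have h1 := hcon p (by omega) hnk
    have h2 := hbig p (by omega) (by omega)
    omega
  set I : Finset ℕ := Finset.Icc (ps + 1) (n + 1) with hI
  set K : Finset (Fin r) := Finset.univ.filter
    (fun k => zc σ (ps + 1) * (d k : ℤ) ≤ m k + (l k : ℤ)) with hK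
  set B : Fin r → Finset ℕ := fun k => I.filter
    (fun p => m k < zc σ p * (d k : ℤ) ∧ zc σ p * (d k : ℤ) ≤ m k + (l k : ℤ)) with hB
  have hcover : I ⊆ K.biUnion B := by
    intro p hp
    rcases hblocked p hp with ⟨k, hk⟩
    rcases hk with ⟨hk1, hk2⟩
    refine Finset.mem_biUnion.mpr ⟨k, ?_, ?_⟩
    · simp only [hK, Finset.mem_filter, Finset.mem_univ, true_and]
      calc zc σ (ps + 1) * (d k : ℤ) ≤ zc σ p * (d k : ℤ) := by
            apply mul_le_mul_of_nonneg_right (zc_mono σ ?_) (by positivity)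
            simp only [hI, Finset.mem_Icc] at hp; omega
        _ ≤ m k + l k := hk2
    · simp only [hB, Finset.mem_filter]
      exact ⟨hp, hk1, hk2⟩
  have hcardB : ∀ k, (B k).card ≤ l k := by
    intro k
    have : (B k).card ≤ (Finset.Ioc (m k) (m k + (l k : ℤ))).card := by
      apply Finset.card_le_card_of_injOn (fun p => zc σ p * (d k : ℤ))
      · intro p hp
        simp only [Finset.mem_coe, hB, Finset.mem_filter] at hp
        exact Finset.mem_Ioc.mpr ⟨hp.2.1, hp.2.2⟩
      · intro p hp p' hp' he
        simp only [hB, Finset.coe_filter, Set.mem_setOf_eq, hI, Finset.mem_Icc] at hp hp'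
        have hd' : (0 : ℤ) < (d k : ℤ) := by exact_mod_cast hd k
        have hz : zc σ p = zc σ p' := by
          exact mul_right_cancel₀ (by omega) he
        by_contra hne
        rcases Nat.lt_or_ge p p' with h | h
        · have := zc_strictmono σ hσ h (by omega) (p := p) (p' := p')
          omega
        · have h' : p' < p := by omega
          have := zc_strictmono σ hσ h' (by omega)
          omega
    rw [Int.card_Ioc] at this
    simpa using this
  have hsumK : ∑ k ∈ K, l k + qval l d m (zc σ (ps + 1)) = n := by
    have hsplit := Finset.sum_filter_add_sum_filter_not Finset.univ
      (fun k => m k + (l k : ℤ) < zc σ (ps + 1) * (d k : ℤ)) l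
    have hKe : K = Finset.univ.filter
        (fun k => ¬(m k + (l k : ℤ) < zc σ (ps + 1) * (d k : ℤ))) := by
      simp only [hK, not_lt]
    rw [hKe]
    unfold qval
    omega
  have hcardI : I.card = n + 1 - ps := by
    rw [hI, Nat.card_Icc]; omega
  have hfinal : I.card ≤ ∑ k ∈ K, l k := by
    calc I.card ≤ (K.biUnion B).card := Finset.card_le_card hcover
      _ ≤ ∑ k ∈ K, (B k).card := Finset.card_biUnion_le
      _ ≤ ∑ k ∈ K, l k := Finset.sum_le_sum (fun k _ => hcardB k)
  omega

theorem stmt7 (r n : ℕ) (hr : 1 ≤ r) (l d : Fin r → ℕ)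
    (hl : ∀ k, 1 ≤ l k) (hd : ∀ k, 1 ≤ d k) (hsum : ∑ k, l k = n)
    (s : Fin (n + 1) → ℕ) (hs : ∀ i, 0 < s i) (hmono : Monotone s)
    (m : Fin r → ℤ) (ν : ℤ) (hN : Nset l d s m = {ν, ν + 1}) :
    Nset l d s m = {0, 1} := by
  classical
  -- element ≥ 1 in N
  obtain ⟨p₁, hp₁, hub₁, hq₁⟩ := chain_exists l d hd hsum m s (fun i => hs i)
  have hmem₁ : ((p₁ : ℤ) - (qval l d m (zc s p₁) : ℤ)) ∈ Nset l d s m :=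
    ⟨p₁, hp₁, zc s p₁, ⟨zc_mem_Sset s hp₁, hub₁⟩, rfl⟩
  have hge₁ : (1 : ℤ) ≤ (p₁ : ℤ) - (qval l d m (zc s p₁) : ℤ) := by omega
  -- reflection: element ≤ 0 in N
  set T : ℤ := ∑ i, (s i : ℤ) with hT
  set m' : Fin r → ℤ := fun k => T * (d k : ℤ) - m k - l k - 1 with hm'
  set σ' : Fin (n + 1) → ℕ := fun i => s i.rev with hσ'
  obtain ⟨p₂, hp₂, hub₂, hq₂⟩ := chain_exists l d hd hsum m' σ' (fun i => hs i.rev)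
  -- the reflected chain point
  have hrefl : zc σ' p₂ = T - zc s (n + 1 - p₂) := by
    have h1 : zc σ' p₂ = ∑ j : Fin (n + 1), if n - (j : ℕ) < p₂ then (s j : ℤ) else 0 := by
      unfold zc
      rw [Fintype.sum_equiv Fin.revPerm _ (fun j => if n - (j : ℕ) < p₂ then (s j : ℤ) else 0)]
      intro j
      simp only [hσ', Fin.revPerm_apply, Fin.rev_rev]
      congr 1
      simp [Fin.val_rev]
      omega
    rw [h1]
    unfold zc
    rw [eq_sub_iff_add_eq, ← Finset.sum_add_distrib, hT]
    apply Finset.sum_congr rfl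
    intro j _
    have hj : (j : ℕ) ≤ n := by omega
    by_cases h : n - (j : ℕ) < p₂
    · rw [if_pos h, if_neg (by omega)]; ring
    · rw [if_neg h, if_pos (by omega)]; ring
  set p := n + 1 - p₂ with hp
  set z := zc s p with hz
  have hpz : (p : ℤ) = (n : ℤ) + 1 - p₂ := by
    simp only [hp]; push_cast; omega
  have hzz : zc σ' p₂ = T - z := by rw [hrefl]
  -- blocked conditions match
  have hPiff : ∀ k, (zc σ' p₂ ∈ Pset (m' k) (d k) (l k)) ↔ (z ∈ Pset (m k) (d k) (l k)) := by
    intro k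
    simp only [Pset, Set.mem_setOf_eq, hzz, hm']
    have he : (T - z) * (d k : ℤ) = T * (d k : ℤ) - z * (d k : ℤ) := by ring
    rw [he]
    constructor <;> intro ⟨h1, h2⟩ <;> constructor <;> omega
  have hub : ∀ k, z ∉ Pset (m k) (d k) (l k) := fun k hk => hub₂ k ((hPiff k).mpr hk)
  -- q' relation: qval of reflected = n - qval z
  have hqrel : (qval l d m' (zc σ' p₂) : ℤ) + (qval l d m z : ℤ) = n := by
    have h1 : qval l d m' (zc σ' p₂)
        = ∑ k ∈ Finset.univ.filter (fun k => z * (d k : ℤ) ≤ m k), l k := by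
      unfold qval
      congr 1
      ext k
      simp only [Finset.mem_filter, Finset.mem_univ, true_and, hm', hzz]
      have he : (T - z) * (d k : ℤ) = T * (d k : ℤ) - z * (d k : ℤ) := by ring
      rw [he]
      omega
    rw [h1]
    unfold qval
    rw [← Nat.cast_add, ← hsum]
    norm_cast
    rw [← Finset.sum_filter_add_sum_filter_not Finset.univ
      (fun k => z * (d k : ℤ) ≤ m k) l]
    congr 1
    apply Finset.sum_congr _ (fun _ _ => rfl)
    ext k
    simp only [Finset.mem_filter, Finset.mem_univ, true_and, not_le]
    have hk := hub k
    simp only [Pset, Set.mem_setOf_eq, not_and, not_le] at hk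
    constructor <;> intro h <;> omega
  have hple : p ≤ n + 1 := by omega
  have hmem₂ : ((p : ℤ) - (qval l d m z : ℤ)) ∈ Nset l d s m :=
    ⟨p, hple, z, ⟨zc_mem_Sset s hple, hub⟩, rfl⟩
  have hle₂ : (p : ℤ) - (qval l d m z : ℤ) ≤ 0 := by omega
  -- conclude ν = 0
  rw [hN] at hmem₁ hmem₂
  simp only [Set.mem_insert_iff, Set.mem_singleton_iff] at hmem₁ hmem₂
  have hν : ν = 0 := by omega
  rw [hN, hν]
  norm_num
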